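/- Let (X,d) be a proper geodesic metric space, φ : X → ℝ a Kantorovich potential, t ∈ (0,1), γ a φ-Kantorovich geodesic, and x = γ_t. Then every φ-Kantorovich geodesic γ′ with γ′_t = x satisfies ℓ(γ′) = ℓ(γ). Moreover, the maps (0,1) ∋ τ ↦ φ_τ(x) and (0,1) ∋ τ ↦ φ̄_τ(x) are both differentiable at τ = t, with derivative equal to ℓ(γ)²/2. -/

import Mathlib

/-- `ψ` is pointwise the `c`-transform of `φ` for the cost `c = d²/2`:
at every point `x`, `ψ x` is a genuine (finite) infimum of `d(x,y)²/2 - φ(y)` over `y`. -/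
def IsCTransform {X : Type*} [MetricSpace X] (φ ψ : X → ℝ) : Prop :=
  ∀ x : X, IsGLB {v : ℝ | ∃ y : X, v = dist x y ^ 2 / 2 - φ y} (ψ x)

/-- `φ` is a Kantorovich potential with (real-valued) conjugate potential `φc`. -/
def IsKantorovichPair {X : Type*} [MetricSpace X] (φ φc : X → ℝ) : Prop :=
  IsCTransform φ φc ∧ IsCTransform φc φ

/-- A constant-speed geodesic parametrized on `[0,1]`. -/
def IsGeodesic {X : Type*} [MetricSpace X] (γ : ℝ → X) : Prop :=
  ∀ s ∈ Set.Icc (0:ℝ) 1, ∀ t ∈ Set.Icc (0:ℝ) 1,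
    dist (γ s) (γ t) = |s - t| * dist (γ 0) (γ 1)

/-- A `φ`-Kantorovich geodesic: a geodesic with `φ(γ₀) + φ^c(γ₁) = ℓ(γ)²/2`,
where `ℓ(γ) = d(γ₀,γ₁)`. -/
def IsKantorovichGeodesic {X : Type*} [MetricSpace X] (φ φc : X → ℝ) (γ : ℝ → X) : Prop :=
  IsGeodesic γ ∧ φ (γ 0) + φc (γ 1) = dist (γ 0) (γ 1) ^ 2 / 2

/-- A metric space is geodesic if every pair of points is joined by a geodesic. -/
def IsGeodesicSpace (X : Type*) [MetricSpace X] : Prop :=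
  ∀ x y : X, ∃ γ : ℝ → X, IsGeodesic γ ∧ γ 0 = x ∧ γ 1 = y

/-- The interpolating intermediate-time Kantorovich potential
`φ_t(x) = -inf_y (d(x,y)²/(2t) - φ(y))` for `t ≠ 0`, and `φ_0 = φ`. -/
noncomputable def interpPotential {X : Type*} [MetricSpace X] (φ : X → ℝ) (t : ℝ) (x : X) : ℝ :=
  if t = 0 then φ x
  else -sInf {v : ℝ | ∃ y : X, v = dist x y ^ 2 / (2 * t) - φ y}

/-- The time-reversed interpolating Kantorovich potential
`φ̄_t(x) = inf_y (d(x,y)²/(2(1-t)) - φ^c(y))` for `t ≠ 1`, and `φ̄_1 = -φ^c`. -/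
noncomputable def reversePotential {X : Type*} [MetricSpace X] (φc : X → ℝ) (t : ℝ) (x : X) : ℝ :=
  if t = 1 then -φc x
  else sInf {v : ℝ | ∃ y : X, v = dist x y ^ 2 / (2 * (1 - t)) - φc y}


lemma key_ineq {τ a c : ℝ} (h0 : 0 < τ) (h1 : τ < 1) :
    -(c ^ 2 / (2 * (1 - τ))) ≤ a ^ 2 / (2 * τ) - (a + c) ^ 2 / 2 := by
  have h2 : 0 < 1 - τ := by linarith
  have key : a ^ 2 / (2 * τ) - (a + c) ^ 2 / 2 + c ^ 2 / (2 * (1 - τ))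
      = ((1 - τ) * a - τ * c) ^ 2 / (2 * τ * (1 - τ)) := by
    field_simp
    ring
  have hpos : 0 ≤ ((1 - τ) * a - τ * c) ^ 2 / (2 * τ * (1 - τ)) := by positivity
  linarith

lemma squeeze_deriv {f L U : ℝ → ℝ} {t d : ℝ}
    (hL : HasDerivAt L d t) (hU : HasDerivAt U d t)
    (hLf : ∀ᶠ τ in nhds t, L τ ≤ f τ) (hfU : ∀ᶠ τ in nhds t, f τ ≤ U τ)
    (hLU : L t = U t) : HasDerivAt f d t := by
  have hft : f t = L t :=
    le_antisymm (hLU ▸ hfU.self_of_nhds) hLf.self_of_nhds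
  rw [hasDerivAt_iff_isLittleO] at hL hU ⊢
  rw [Asymptotics.isLittleO_iff] at hL hU ⊢
  intro c hc
  have hc2 : 0 < c / 2 := by linarith
  filter_upwards [hL hc2, hU hc2, hLf, hfU] with τ h1 h2 h3 h4
  simp only [smul_eq_mul, Real.norm_eq_abs] at h1 h2 ⊢
  rw [abs_le] at h1 h2 ⊢
  have hA : 0 ≤ |τ - t| := abs_nonneg _
  have hP : 0 ≤ c / 2 * |τ - t| := by positivity
  constructor
  · linarith [h1.1]
  · linarith [h2.2]

lemma interp_bounds {X : Type*} [MetricSpace X] {φ φc : X → ℝ}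
    (hpair : IsKantorovichPair φ φc) (x y0 y1 : X) {τ : ℝ} (hτ : τ ∈ Set.Ioo (0:ℝ) 1) :
    φ y0 - dist x y0 ^ 2 / (2 * τ) ≤ interpPotential φ τ x ∧
      interpPotential φ τ x ≤ -φc y1 + dist x y1 ^ 2 / (2 * (1 - τ)) := by
  obtain ⟨hτ0, hτ1⟩ := hτ
  have hτne : τ ≠ 0 := ne_of_gt hτ0
  simp only [interpPotential, if_neg hτne]
  have hlb : ∀ v ∈ {v : ℝ | ∃ y : X, v = dist x y ^ 2 / (2 * τ) - φ y},
      φc y1 - dist x y1 ^ 2 / (2 * (1 - τ)) ≤ v := by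
    rintro v ⟨y, rfl⟩
    have h1 : φ y ≤ dist y y1 ^ 2 / 2 - φc y1 := (hpair.2 y).1 ⟨y1, rfl⟩
    have h2 : dist y y1 ≤ dist x y + dist x y1 := by
      rw [dist_comm x y]; exact dist_triangle y x y1
    have h3 : dist y y1 ^ 2 ≤ (dist x y + dist x y1) ^ 2 :=
      pow_le_pow_left₀ dist_nonneg h2 2
    have h4 := key_ineq (a := dist x y) (c := dist x y1) hτ0 hτ1
    linarith
  have hbdd : BddBelow {v : ℝ | ∃ y : X, v = dist x y ^ 2 / (2 * τ) - φ y} :=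
    ⟨_, fun v hv => hlb v hv⟩
  have hne : {v : ℝ | ∃ y : X, v = dist x y ^ 2 / (2 * τ) - φ y}.Nonempty := ⟨_, y0, rfl⟩
  constructor
  · have := csInf_le hbdd (⟨y0, rfl⟩ : dist x y0 ^ 2 / (2 * τ) - φ y0 ∈
      {v : ℝ | ∃ y : X, v = dist x y ^ 2 / (2 * τ) - φ y})
    linarith
  · have := le_csInf hne hlb
    linarith

lemma reverse_bounds {X : Type*} [MetricSpace X] {φ φc : X → ℝ}
    (hpair : IsKantorovichPair φ φc) (x y0 y1 : X) {τ : ℝ} (hτ : τ ∈ Set.Ioo (0:ℝ) 1) :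
    φ y0 - dist x y0 ^ 2 / (2 * τ) ≤ reversePotential φc τ x ∧
      reversePotential φc τ x ≤ dist x y1 ^ 2 / (2 * (1 - τ)) - φc y1 := by
  obtain ⟨hτ0, hτ1⟩ := hτ
  have hτne : τ ≠ 1 := ne_of_lt hτ1
  have h1τ : (0:ℝ) < 1 - τ := by linarith
  simp only [reversePotential, if_neg hτne]
  have hlb : ∀ v ∈ {v : ℝ | ∃ y : X, v = dist x y ^ 2 / (2 * (1 - τ)) - φc y},
      φ y0 - dist x y0 ^ 2 / (2 * τ) ≤ v := by
    rintro v ⟨y, rfl⟩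
    have h1 : φc y ≤ dist y y0 ^ 2 / 2 - φ y0 := (hpair.1 y).1 ⟨y0, rfl⟩
    have h2 : dist y y0 ≤ dist x y + dist x y0 := by
      rw [dist_comm x y]; exact dist_triangle y x y0
    have h3 : dist y y0 ^ 2 ≤ (dist x y + dist x y0) ^ 2 :=
      pow_le_pow_left₀ dist_nonneg h2 2
    have h4 := key_ineq (a := dist x y) (c := dist x y0) h1τ (by linarith : 1 - τ < 1)
    rw [show (1 : ℝ) - (1 - τ) = τ by ring] at h4
    linarith
  have hbdd : BddBelow {v : ℝ | ∃ y : X, v = dist x y ^ 2 / (2 * (1 - τ)) - φc y} :=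
    ⟨_, fun v hv => hlb v hv⟩
  have hne : {v : ℝ | ∃ y : X, v = dist x y ^ 2 / (2 * (1 - τ)) - φc y}.Nonempty := ⟨_, y1, rfl⟩
  exact ⟨le_csInf hne hlb, csInf_le hbdd ⟨y1, rfl⟩⟩

lemma main_deriv {X : Type*} [MetricSpace X] {φ φc : X → ℝ}
    (hpair : IsKantorovichPair φ φc) {t : ℝ} (ht : t ∈ Set.Ioo (0:ℝ) 1)
    {γ : ℝ → X} (hγ : IsKantorovichGeodesic φ φc γ) {x : X} (hx : γ t = x) :
    HasDerivAt (fun τ => interpPotential φ τ x) (dist (γ 0) (γ 1) ^ 2 / 2) t ∧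
      HasDerivAt (fun τ => reversePotential φc τ x) (dist (γ 0) (γ 1) ^ 2 / 2) t := by
  obtain ⟨ht0, ht1⟩ := ht
  have ht1' : (0:ℝ) < 1 - t := by linarith
  have hb : dist x (γ 0) = t * dist (γ 0) (γ 1) := by
    rw [← hx]
    have := hγ.1 t ⟨ht0.le, ht1.le⟩ 0 ⟨le_refl 0, zero_le_one⟩
    rwa [sub_zero, abs_of_pos ht0] at this
  have hc : dist x (γ 1) = (1 - t) * dist (γ 0) (γ 1) := by
    rw [← hx]
    have := hγ.1 t ⟨ht0.le, ht1.le⟩ 1 ⟨zero_le_one, le_refl 1⟩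
    rwa [abs_of_neg (by linarith : t - 1 < 0), neg_sub] at this
  have hsum : φ (γ 0) + φc (γ 1) = dist (γ 0) (γ 1) ^ 2 / 2 := hγ.2
  have hLder : HasDerivAt (fun τ : ℝ => φ (γ 0) - dist x (γ 0) ^ 2 / (2 * τ))
      (dist (γ 0) (γ 1) ^ 2 / 2) t := by
    have h1 : HasDerivAt (fun τ : ℝ => τ⁻¹) (-(t ^ 2)⁻¹) t := hasDerivAt_inv ht0.ne'
    have h2 := (h1.const_mul (dist x (γ 0) ^ 2 / 2)).const_sub (φ (γ 0))
    have heq : (fun τ : ℝ => φ (γ 0) - dist x (γ 0) ^ 2 / (2 * τ))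
        = fun τ : ℝ => φ (γ 0) - dist x (γ 0) ^ 2 / 2 * τ⁻¹ := by
      funext τ; rw [← div_div, div_eq_mul_inv]
    rw [heq]
    refine h2.congr_deriv ?_
    rw [hb]
    field_simp
  have hUder : HasDerivAt (fun τ : ℝ => -φc (γ 1) + dist x (γ 1) ^ 2 / (2 * (1 - τ)))
      (dist (γ 0) (γ 1) ^ 2 / 2) t := by
    have h0 : HasDerivAt (fun τ : ℝ => 1 - τ) (-1) t := (hasDerivAt_id t).const_sub 1
    have h1 : HasDerivAt (fun τ : ℝ => (1 - τ)⁻¹) (((1 - t) ^ 2)⁻¹) t := by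
      have := (hasDerivAt_inv ht1'.ne').comp t h0
      simpa [Function.comp_def] using this
    have h2 := (h1.const_mul (dist x (γ 1) ^ 2 / 2)).const_add (-φc (γ 1))
    have heq : (fun τ : ℝ => -φc (γ 1) + dist x (γ 1) ^ 2 / (2 * (1 - τ)))
        = fun τ : ℝ => -φc (γ 1) + dist x (γ 1) ^ 2 / 2 * (1 - τ)⁻¹ := by
      funext τ; rw [← div_div, div_eq_mul_inv]
    rw [heq]
    refine h2.congr_deriv ?_
    rw [hc]
    field_simp
  have hLU : φ (γ 0) - dist x (γ 0) ^ 2 / (2 * t)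
      = -φc (γ 1) + dist x (γ 1) ^ 2 / (2 * (1 - t)) := by
    rw [hb, hc]
    have h : φc (γ 1) = dist (γ 0) (γ 1) ^ 2 / 2 - φ (γ 0) := by linarith
    rw [h]
    field_simp
    ring
  have hmem : Set.Ioo (0:ℝ) 1 ∈ nhds t := isOpen_Ioo.mem_nhds ⟨ht0, ht1⟩
  constructor
  · refine squeeze_deriv hLder hUder ?_ ?_ hLU
    · filter_upwards [hmem] with τ hτ
      exact (interp_bounds hpair x (γ 0) (γ 1) hτ).1
    · filter_upwards [hmem] with τ hτ
      exact (interp_bounds hpair x (γ 0) (γ 1) hτ).2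
  · refine squeeze_deriv hLder hUder ?_ ?_ hLU
    · filter_upwards [hmem] with τ hτ
      exact (reverse_bounds hpair x (γ 0) (γ 1) hτ).1
    · filter_upwards [hmem] with τ hτ
      have := (reverse_bounds hpair x (γ 0) (γ 1) hτ).2
      show reversePotential φc τ x ≤ -φc (γ 1) + dist x (γ 1) ^ 2 / (2 * (1 - τ))
      linarith


/-- On a proper geodesic space, if `x = γ_t` for a `φ`-Kantorovich geodesic `γ` and
`t ∈ (0,1)`, then every `φ`-Kantorovich geodesic through `x` at time `t` has the same
length as `γ`, and both `τ ↦ φ_τ(x)` and `τ ↦ φ̄_τ(x)` are differentiable at `τ = t`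
with derivative `ℓ(γ)²/2`. -/
theorem statement3 {X : Type*} [MetricSpace X] [ProperSpace X]
    (hgeo : IsGeodesicSpace X) (φ φc : X → ℝ) (hpair : IsKantorovichPair φ φc)
    (t : ℝ) (ht : t ∈ Set.Ioo (0:ℝ) 1)
    (γ : ℝ → X) (hγ : IsKantorovichGeodesic φ φc γ) (x : X) (hx : γ t = x) :
    (∀ γ' : ℝ → X, IsKantorovichGeodesic φ φc γ' → γ' t = x →
        dist (γ' 0) (γ' 1) = dist (γ 0) (γ 1)) ∧
      HasDerivAt (fun τ => interpPotential φ τ x) (dist (γ 0) (γ 1) ^ 2 / 2) t ∧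
      HasDerivAt (fun τ => reversePotential φc τ x) (dist (γ 0) (γ 1) ^ 2 / 2) t := by
  obtain ⟨H1, H2⟩ := main_deriv hpair ht hγ hx
  refine ⟨?_, H1, H2⟩
  intro γ' hγ' hx'
  obtain ⟨H1', H2'⟩ := main_deriv hpair ht hγ' hx'
  have h := H1'.unique H1
  have h2 : dist (γ' 0) (γ' 1) ^ 2 = dist (γ 0) (γ 1) ^ 2 := by linarith
  have h3 : |dist (γ' 0) (γ' 1)| = |dist (γ 0) (γ 1)| := by
    rw [← Real.sqrt_sq_eq_abs, ← Real.sqrt_sq_eq_abs, h2]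
  rwa [abs_of_nonneg dist_nonneg, abs_of_nonneg dist_nonneg] at h3
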